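/- Let M be a simple rank-3 matroid on n elements with no coloops. Then c̄₁²(M) ≤ 3·c̄₂(M); equivalently, n ≤ Σ_{m≥2} t_m, i.e. the number of rank-2 flats of M is at least the number of elements. -/

import Mathlib

/- Chern numbers of matroids (Mannino). Background definitions. -/

open scoped Matroid
open Finset

namespace Paper

variable {α : Type*}

/-- The rank of a set in a matroid: the maximal size of an independent subset. -/
noncomputable def mrk (M : Matroid α) (X : Set α) : ℕ :=
  sSup (Set.ncard '' {I | M.Indep I ∧ I ⊆ X})

/-- A matroid is simple if it has no loops and no parallel pairs, i.e. every
subset of the ground set with at most two elements is independent. -/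
def Simple (M : Matroid α) : Prop := ∀ e ∈ M.E, ∀ f ∈ M.E, M.Indep {e, f}

/-- A matroid is loopless if every singleton of the ground set is independent. -/
def Loopless (M : Matroid α) : Prop := ∀ e ∈ M.E, M.Indep {e}

/-- A coloop is an element contained in every base. -/
def Coloop (M : Matroid α) (e : α) : Prop := e ∈ M.E ∧ ∀ B, M.IsBase B → e ∈ B

/-- `t M m` is the number of rank-2 flats of `M` of size `m`. -/
noncomputable def t (M : Matroid α) (m : ℕ) : ℕ :=
  {F : Set α | M.IsFlat F ∧ mrk M F = 2 ∧ F.ncard = m}.ncard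

/-- The first Chern number `c̄₁²` of a simple rank-3 matroid,
`9 - 5n + ∑_{m ≥ 2} (3m-4) t_m`. -/
noncomputable def c1sq (M : Matroid α) : ℤ :=
  9 - 5 * (M.E.ncard : ℤ) +
    ∑ m ∈ Finset.Icc 2 M.E.ncard, (3 * (m : ℤ) - 4) * t M m

/-- The second Chern number `c̄₂` of a simple rank-3 matroid,
`3 - 2n + ∑_{m ≥ 2} (m-1) t_m`. -/
noncomputable def c2 (M : Matroid α) : ℤ :=
  3 - 2 * (M.E.ncard : ℤ) +
    ∑ m ∈ Finset.Icc 2 M.E.ncard, ((m : ℤ) - 1) * t M m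

/-- The beta invariant of a matroid on a finite type (Crapo's formula):
`β(M) = (-1)^{r(E)} ∑_{S ⊆ E} (-1)^{|S|} r(S)`. -/
noncomputable def beta (M : Matroid α) [Fintype α] : ℤ :=
  (-1) ^ (mrk M M.E) *
    ∑ S ∈ (Set.toFinite M.E).toFinset.powerset,
      (-1 : ℤ) ^ S.card * (mrk M (S : Set α) : ℤ)

/-- `M` is the uniform matroid of rank `r` on its ground set: the independent
sets are exactly the finite subsets of the ground set of size at most `r`. -/
def IsUniform (M : Matroid α) (r : ℕ) : Prop :=
  ∀ I, I ⊆ M.E → (M.Indep I ↔ I.Finite ∧ I.ncard ≤ r)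

end Paper

open Paper

namespace Aux
open Paper
variable {α : Type*} {M : Matroid α}

lemma flat_closure (M : Matroid α) (X : Set α) : M.IsFlat (M.closure X) := by
  rw [Matroid.closure_def, Set.sInter_eq_iInter]
  haveI : Nonempty ↑{F | M.IsFlat F ∧ X ∩ M.E ⊆ F} :=
    ⟨⟨M.E, M.ground_isFlat, Set.inter_subset_right⟩⟩
  exact Matroid.IsFlat.iInter fun F => F.2.1

lemma mrk_eq_of_basis (hE : M.E.Finite) {I X : Set α} (hI : M.IsBasis I X) :
    mrk M X = I.ncard := by
  have hXE : X ⊆ M.E := hI.subset_ground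
  apply le_antisymm
  · refine csSup_le ⟨I.ncard, ⟨I, ⟨hI.indep, hI.subset⟩, rfl⟩⟩ ?_
    rintro k ⟨J, ⟨hJind, hJX⟩, rfl⟩
    obtain ⟨J', hJ', hJJ'⟩ := hJind.subset_isBasis_of_subset hJX hXE
    have h1 : J'.encard = I.encard := hJ'.encard_eq_encard hI
    have hJ'fin : J'.Finite := hE.subset (hJ'.subset.trans hXE)
    calc J.ncard ≤ J'.ncard := Set.ncard_le_ncard hJJ' hJ'fin
    _ = I.ncard := by rw [Set.ncard_def, Set.ncard_def, h1]
  · apply le_csSup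
    · refine ⟨M.E.ncard, ?_⟩
      rintro k ⟨J, ⟨hJind, hJX⟩, rfl⟩
      exact Set.ncard_le_ncard (hJX.trans hXE) hE
    · exact ⟨I, ⟨hI.indep, hI.subset⟩, rfl⟩

lemma flat_eq_of_subset_of_mrk_eq (hE : M.E.Finite) {F G : Set α}
    (hF : M.IsFlat F) (hG : M.IsFlat G) (hFG : F ⊆ G) (h : mrk M F = mrk M G) :
    F = G := by
  obtain ⟨I, hI⟩ := M.exists_isBasis F hF.subset_ground
  obtain ⟨J, hJ, hIJ⟩ := hI.indep.subset_isBasis_of_subset (hI.subset.trans hFG) hG.subset_ground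
  have h1 : I.ncard = J.ncard := by
    rw [← mrk_eq_of_basis hE hI, ← mrk_eq_of_basis hE hJ, h]
  have hJfin : J.Finite := hE.subset hJ.indep.subset_ground
  have hIJ' : I = J := Set.eq_of_subset_of_ncard_le hIJ h1.ge hJfin
  have e1 : M.closure I = F := by rw [hI.closure_eq_closure, hF.closure]
  have e2 : M.closure J = G := by rw [hJ.closure_eq_closure, hG.closure]
  rw [← e1, ← e2, hIJ']

lemma mrk_closure_pair (hE : M.E.Finite) (hs : Simple M) {e f : α}
    (he : e ∈ M.E) (hf : f ∈ M.E) (hef : e ≠ f) :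
    mrk M (M.closure {e, f}) = 2 := by
  have hind : M.Indep {e, f} := hs e he f hf
  rw [mrk_eq_of_basis hE hind.isBasis_closure, Set.ncard_pair hef]

lemma line_eq (hE : M.E.Finite) (hs : Simple M) {F : Set α} {e f : α}
    (hF : M.IsFlat F) (h2 : mrk M F = 2) (he : e ∈ F) (hf : f ∈ F) (hef : e ≠ f) :
    F = M.closure {e, f} := by
  have hpair : ({e, f} : Set α) ⊆ F := Set.pair_subset he hf
  have hsub : M.closure {e, f} ⊆ F := by
    have := M.closure_subset_closure hpair
    rwa [hF.closure] at this
  refine (flat_eq_of_subset_of_mrk_eq hE (flat_closure M _) hF hsub ?_).symm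
  rw [mrk_closure_pair hE hs (hF.subset_ground he) (hF.subset_ground hf) hef, h2]

lemma exists_line (hE : M.E.Finite) (hs : Simple M) (hr : mrk M M.E = 3)
    {p : α} (hp : p ∈ M.E) :
    ∃ F : Set α, M.IsFlat F ∧ mrk M F = 2 ∧ p ∉ F := by
  obtain ⟨B, hB⟩ := M.exists_isBasis M.E
  have hB3 : B.ncard = 3 := by rw [← mrk_eq_of_basis hE hB, hr]
  obtain ⟨a, b, c, hab, hac, hbc, rfl⟩ := Set.ncard_eq_three.mp hB3
  have hind := hB.indep
  have haE : a ∈ M.E := hind.subset_ground (by simp)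
  have hbE : b ∈ M.E := hind.subset_ground (by simp)
  have hcE : c ∈ M.E := hind.subset_ground (by simp)
  have hkey : ∀ x y z : α, ({x, y, z} : Set α) = {a, b, c} → x ≠ y → x ≠ z → y ≠ z →
      z ∉ M.closure {x, y} := by
    intro x y z hxyz hxy hxz hyz
    have hindxyz : M.Indep {x, y, z} := hxyz ▸ hind
    have hindxy : M.Indep {x, y} :=
      hindxyz.subset (by
        intro t ht
        simp only [Set.mem_insert_iff, Set.mem_singleton_iff] at ht ⊢
        tauto)
    have hzE : z ∈ M.E := hindxyz.subset_ground (by simp)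
    rw [hindxy.notMem_closure_iff hzE]
    constructor
    · have : insert z ({x, y} : Set α) = {x, y, z} := by
        ext t; simp; tauto
      rw [this]; exact hindxyz
    · simp [Ne.symm hxz, Ne.symm hyz]
  have hcab : c ∉ M.closure {a, b} := hkey a b c rfl hab hac hbc
  by_cases hpa : p = a
  · refine ⟨M.closure {b, c}, flat_closure M _, mrk_closure_pair hE hs hbE hcE hbc, ?_⟩
    subst hpa
    exact hkey b c p (by ext t; simp; tauto) hbc (Ne.symm hab) (Ne.symm hac)
  · by_cases h1 : p ∈ M.closure {a, b}
    · by_cases h2 : p ∈ M.closure {a, c}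
      · exfalso
        have haab : a ∈ M.closure {a, b} := M.subset_closure {a, b}
          (Set.pair_subset haE hbE) (by simp)
        have haac : a ∈ M.closure {a, c} := M.subset_closure {a, c}
          (Set.pair_subset haE hcE) (by simp)
        have e1 : M.closure {a, b} = M.closure {p, a} :=
          line_eq hE hs (flat_closure M _) (mrk_closure_pair hE hs haE hbE hab) h1 haab hpa
        have e2 : M.closure {a, c} = M.closure {p, a} :=
          line_eq hE hs (flat_closure M _) (mrk_closure_pair hE hs haE hcE hac) h2 haac hpa
        have hc2 : c ∈ M.closure {a, c} := M.subset_closure {a, c}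
          (Set.pair_subset haE hcE) (by simp)
        rw [e2, ← e1] at hc2
        exact hcab hc2
      · exact ⟨M.closure {a, c}, flat_closure M _, mrk_closure_pair hE hs haE hcE hac, h2⟩
    · exact ⟨M.closure {a, b}, flat_closure M _, mrk_closure_pair hE hs haE hbE hab, h1⟩

end Aux

namespace Aux2
open Paper Aux
variable {α : Type*}

lemma card_le_lines (M : Matroid α) (hE : M.E.Finite) (hs : Simple M)
    (hr : mrk M M.E = 3) :
    M.E.ncard ≤ {F : Set α | M.IsFlat F ∧ mrk M F = 2}.ncard := by
  classical
  set S := {F : Set α | M.IsFlat F ∧ mrk M F = 2} with hS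
  have hSfin : S.Finite :=
    hE.finite_subsets.subset (fun F hF => hF.1.subset_ground)
  letI : Membership ↥M.E ↥S := ⟨fun l p => (p : α) ∈ (l : Set α)⟩
  haveI : Fintype ↥M.E := hE.fintype
  haveI : Fintype ↥S := hSfin.fintype
  have hmem : ∀ (p : ↥M.E) (l : ↥S), p ∈ l ↔ (p : α) ∈ (l : Set α) := fun _ _ => Iff.rfl
  haveI : Configuration.HasLines ↥M.E ↥S :=
    { exists_point := by
        intro l
        by_contra h
        push_neg at h
        have hEl : M.E ⊆ (l : Set α) := fun x hx => by
          exact (hmem _ _).mp (h ⟨x, hx⟩)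
        have heq : (l : Set α) = M.E := le_antisymm l.2.1.subset_ground hEl
        have h22 : mrk M (l : Set α) = 2 := l.2.2
        rw [heq, hr] at h22
        omega
      exists_line := by
        intro p
        obtain ⟨F, hF, h2, hpF⟩ := exists_line hE hs hr p.2
        exact ⟨⟨F, hF, h2⟩, hpF⟩
      eq_or_eq := by
        rintro p₁ p₂ l₁ l₂ h₁ h₂ h₃ h₄
        by_cases hp : p₁ = p₂
        · exact Or.inl hp
        · refine Or.inr (Subtype.ext ?_)
          have hne : (p₁ : α) ≠ (p₂ : α) := fun h => hp (Subtype.ext h)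
          rw [line_eq hE hs l₁.2.1 l₁.2.2 h₁ h₂ hne,
            line_eq hE hs l₂.2.1 l₂.2.2 h₃ h₄ hne]
      mkLine := fun {p₁ p₂} h =>
        ⟨M.closure {(p₁ : α), (p₂ : α)}, flat_closure M _,
          mrk_closure_pair hE hs p₁.2 p₂.2 (fun he => h (Subtype.ext he))⟩
      mkLine_ax := by
        intro p₁ p₂ h
        constructor <;>
        · rw [hmem]
          exact M.subset_closure {(p₁ : α), (p₂ : α)}
            (Set.pair_subset p₁.2 p₂.2) (by simp) }
  have hcard := Configuration.HasLines.card_le (P := ↥M.E) (L := ↥S)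
  have e1 : M.E.ncard = Fintype.card ↥M.E := by
    rw [← Nat.card_coe_set_eq, Nat.card_eq_fintype_card]
  have e2 : S.ncard = Fintype.card ↥S := by
    rw [← Nat.card_coe_set_eq, Nat.card_eq_fintype_card]
  rw [e1, e2]
  exact hcard

end Aux2

namespace Aux3
open Paper Aux
variable {α : Type*}

lemma ncard_lines_eq_sum (M : Matroid α) (hE : M.E.Finite) :
    {F : Set α | M.IsFlat F ∧ mrk M F = 2}.ncard
      = ∑ m ∈ Finset.Icc 2 M.E.ncard, t M m := by
  classical
  set S := {F : Set α | M.IsFlat F ∧ mrk M F = 2} with hS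
  have hSfin : S.Finite :=
    hE.finite_subsets.subset (fun F hF => hF.1.subset_ground)
  have hbounds : ∀ F ∈ hSfin.toFinset, F.ncard ∈ Finset.Icc 2 M.E.ncard := by
    intro F hF
    rw [Set.Finite.mem_toFinset] at hF
    obtain ⟨hFl, h2⟩ := hF
    have hFE : F ⊆ M.E := hFl.subset_ground
    have hFfin : F.Finite := hE.subset hFE
    obtain ⟨I, hI⟩ := M.exists_isBasis F hFE
    have hI2 : I.ncard = 2 := by rw [← mrk_eq_of_basis hE hI, h2]
    refine Finset.mem_Icc.mpr ⟨?_, Set.ncard_le_ncard hFE hE⟩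
    rw [← hI2]
    exact Set.ncard_le_ncard hI.subset hFfin
  have hmain := Finset.card_eq_sum_card_fiberwise hbounds
  rw [Set.ncard_eq_toFinset_card _ hSfin, hmain]
  refine Finset.sum_congr rfl fun m _ => ?_
  have hset : {F : Set α | M.IsFlat F ∧ mrk M F = 2 ∧ F.ncard = m}
      = ↑(hSfin.toFinset.filter fun F => F.ncard = m) := by
    ext F
    simp [Set.Finite.mem_toFinset, hS, and_assoc]
  rw [t, hset, Set.ncard_coe_finset]

end Aux3


/-- For a simple rank-3 matroid on `n` elements with no coloops,
`c̄₁²(M) ≤ 3·c̄₂(M)`; equivalently the number of rank-2 flats is at least `n`. -/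
theorem stmt_10 {α : Type*} (M : Matroid α) (n : ℕ) (hE : M.E.Finite)
    (hn : M.E.ncard = n) (hs : Simple M) (hr : mrk M M.E = 3)
    (hc : ∀ e, ¬ Coloop M e) :
    c1sq M ≤ 3 * c2 M ∧ n ≤ {F : Set α | M.IsFlat F ∧ mrk M F = 2}.ncard := by
  have key : n ≤ {F : Set α | M.IsFlat F ∧ Paper.mrk M F = 2}.ncard :=
    hn ▸ Aux2.card_le_lines M hE hs hr
  refine ⟨?_, key⟩
  have hsum := Aux3.ncard_lines_eq_sum M hE
  have h1 : (n : ℤ) ≤ ∑ m ∈ Finset.Icc 2 M.E.ncard, (Paper.t M m : ℤ) := by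
    have : (n : ℤ) ≤ (∑ m ∈ Finset.Icc 2 M.E.ncard, Paper.t M m : ℕ) := by
      exact_mod_cast hsum ▸ key
    simpa [Nat.cast_sum] using this
  have e1 : ∑ m ∈ Finset.Icc 2 M.E.ncard,
        (3 * (((m : ℤ) - 1) * Paper.t M m) - (3 * (m : ℤ) - 4) * Paper.t M m)
      = ∑ m ∈ Finset.Icc 2 M.E.ncard, (Paper.t M m : ℤ) :=
    Finset.sum_congr rfl fun m _ => by ring
  rw [Finset.sum_sub_distrib] at e1
  have e2 : ∑ m ∈ Finset.Icc 2 M.E.ncard, 3 * (((m : ℤ) - 1) * Paper.t M m)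
      = 3 * ∑ m ∈ Finset.Icc 2 M.E.ncard, ((m : ℤ) - 1) * Paper.t M m := by
    rw [Finset.mul_sum]
  rw [Paper.c1sq, Paper.c2, hn]
  rw [hn] at e1 e2 h1
  linarith [e1, e2, h1]
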